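/- Suppose β > 1 and h > 0, and let m₀ ∈ (0,1) be the largest solution in (−1,1) of the Curie-Weiss equation m = tanh(β(m+h)). Then m₀ > m₁, where m₁ := √((β−1)/β). -/

import Mathlib

open Real

lemma tanh_formula (x : ℝ) : Real.tanh x = (Real.exp (2*x) - 1) / (Real.exp (2*x) + 1) := by
  rw [Real.tanh_eq_sinh_div_cosh, Real.sinh_eq, Real.cosh_eq]
  rw [Real.exp_neg, two_mul, Real.exp_add]
  have hE := Real.exp_pos x
  field_simp

lemma my_continuous_tanh : Continuous Real.tanh := by
  have : Real.tanh = fun x => Real.sinh x / Real.cosh x := by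
    funext x; exact Real.tanh_eq_sinh_div_cosh x
  rw [this]
  exact Real.continuous_sinh.div Real.continuous_cosh (fun x => (Real.cosh_pos x).ne')

lemma tanh_lt_one (x : ℝ) : Real.tanh x < 1 := by
  rw [tanh_formula]
  have h := Real.exp_pos (2*x)
  rw [div_lt_one (by linarith)]; linarith

-- key analytic lemma: (1-m^2) * log((1+m)/(1-m)) < 2m on (0,1)
lemma key (m : ℝ) (h0 : 0 < m) (h1 : m < 1) :
    (1 - m^2) * (Real.log (1+m) - Real.log (1-m)) < 2*m := by
  set F : ℝ → ℝ := fun x => 2*x - (1 - x^2) * (Real.log (1+x) - Real.log (1-x)) with hF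
  have hderiv : ∀ x ∈ Set.Ioo (0:ℝ) 1, HasDerivAt F (2*x*(Real.log (1+x) - Real.log (1-x))) x := by
    intro x hx
    obtain ⟨hx0, hx1⟩ := hx
    have hl1 : HasDerivAt (fun x : ℝ => Real.log (1+x)) (1/(1+x)) x := by
      have := (Real.hasDerivAt_log (by linarith : (1:ℝ)+x ≠ 0)).comp x
        ((hasDerivAt_id x).const_add 1)
      exact this.congr_deriv (by simp)
    have hl2 : HasDerivAt (fun x : ℝ => Real.log (1-x)) (-(1/(1-x))) x := by
      have := (Real.hasDerivAt_log (by linarith : (1:ℝ)-x ≠ 0)).comp x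
        ((hasDerivAt_id x).const_sub 1)
      exact this.congr_deriv (by simp)
    have hq : HasDerivAt (fun x : ℝ => (1 - x^2)) (-(2*x)) x := by
      have := ((hasDerivAt_pow 2 x)).const_sub 1
      simpa using this
    have hmul := hq.mul (hl1.sub hl2)
    have hfull := (hasDerivAt_id x).const_mul 2 |>.sub hmul
    refine hfull.congr_deriv ?_
    have ha : (1:ℝ)+x ≠ 0 := by linarith
    have hb : (1:ℝ)-x ≠ 0 := by linarith
    have h1 : (1 - x^2) * (1/(1+x) - -(1/(1-x))) = 2 := by field_simp; ring
    rw [h1]; simp only [Pi.sub_apply]; ring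
  have hcont : ContinuousOn F (Set.Ico 0 1) := by
    apply ContinuousOn.sub ((continuous_const.mul continuous_id).continuousOn)
    apply ContinuousOn.mul ((continuous_const.sub (continuous_pow 2)).continuousOn)
    apply ContinuousOn.sub
    · apply ContinuousOn.log ((continuous_const.add continuous_id).continuousOn)
      intro x hx
      simp only [Set.mem_Ico] at hx
      simp only [Pi.add_apply, id]
      linarith [hx.1]
    · apply ContinuousOn.log ((continuous_const.sub continuous_id).continuousOn)
      intro x hx
      simp only [Set.mem_Ico] at hx
      simp only [Pi.sub_apply, id]
      intro hc
      linarith [hx.2]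
  have hmono : StrictMonoOn F (Set.Ico 0 1) := by
    apply strictMonoOn_of_deriv_pos (convex_Ico 0 1) hcont
    intro x hx
    rw [interior_Ico] at hx
    rw [(hderiv x hx).deriv]
    have hlog := Real.log_lt_log (by linarith [hx.2] : (0:ℝ) < 1 - x) (by linarith [hx.1] : (1:ℝ) - x < 1 + x)
    have := hx.1
    nlinarith
  have hlt := hmono (Set.left_mem_Ico.mpr one_pos) ⟨h0.le, h1⟩ h0
  have hF0 : F 0 = 0 := by simp [hF]
  rw [hF0] at hlt
  simp only [hF] at hlt
  linarith

-- if log((1+m)/(1-m)) < 2t then m < tanh t, for m ∈ (0,1)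
lemma tanh_gt (m t : ℝ) (h0 : 0 < m) (h1 : m < 1)
    (hlog : Real.log (1+m) - Real.log (1-m) < 2*t) : m < Real.tanh t := by
  have ha : (0:ℝ) < 1 + m := by linarith
  have hb : (0:ℝ) < 1 - m := by linarith
  have hE : (1+m)/(1-m) < Real.exp (2*t) := by
    rw [← Real.exp_log (by positivity : (0:ℝ) < (1+m)/(1-m))]
    apply Real.exp_lt_exp.mpr
    rw [Real.log_div ha.ne' hb.ne']
    exact hlog
  rw [tanh_formula]
  have hEpos := Real.exp_pos (2*t)
  rw [lt_div_iff₀ (by linarith : (0:ℝ) < Real.exp (2*t) + 1)]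
  rw [div_lt_iff₀ hb] at hE
  nlinarith

/-- `m₀` is the largest solution in `(-1,1)` of the Curie-Weiss equation
`m = tanh(β(m+h))`, and it lies in `(0,1)`. -/
def IsLargestCWRoot (β h m₀ : ℝ) : Prop :=
  m₀ ∈ Set.Ioo (0 : ℝ) 1 ∧ m₀ = Real.tanh (β * (m₀ + h)) ∧
    ∀ m ∈ Set.Ioo (-1 : ℝ) 1, m = Real.tanh (β * (m + h)) → m ≤ m₀

/-- if `β > 1`, `h > 0` and `m₀ ∈ (0,1)` is the largest solution in
`(-1,1)` of the Curie-Weiss equation, then `m₀ > m₁` where `m₁ := √((β-1)/β)`. -/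
theorem curieWeiss_root_gt_m1 (β h m₀ : ℝ) (hβ : 1 < β) (hh : 0 < h)
    (hm₀ : IsLargestCWRoot β h m₀) :
    m₀ > Real.sqrt ((β - 1) / β) := by
  obtain ⟨⟨hm0pos, hm0lt⟩, hroot, hmax⟩ := hm₀
  set m₁ := Real.sqrt ((β - 1) / β) with hm₁
  have hβ0 : (0:ℝ) < β := by linarith
  have hfrac0 : (0:ℝ) < (β-1)/β := div_pos (by linarith) hβ0
  have hfrac1 : (β-1)/β < 1 := by rw [div_lt_one hβ0]; linarith
  have hm₁0 : 0 < m₁ := Real.sqrt_pos.mpr hfrac0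
  have hm₁sq : m₁^2 = (β-1)/β := Real.sq_sqrt hfrac0.le
  have hm₁1 : m₁ < 1 := by nlinarith [hm₁sq, hm₁0, hfrac1]
  have honemsq : 1 - m₁^2 = 1/β := by rw [hm₁sq]; field_simp; ring
  -- g(m₁) > 0
  have hg1 : m₁ < Real.tanh (β * (m₁ + h)) := by
    apply tanh_gt m₁ _ hm₁0 hm₁1
    have hk := key m₁ hm₁0 hm₁1
    rw [honemsq] at hk
    have : Real.log (1+m₁) - Real.log (1-m₁) < 2 * (β * m₁) := by
      rw [div_mul_eq_mul_div, div_lt_iff₀ hβ0] at hk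
      nlinarith
    nlinarith
  -- IVT on [m₁, 1]
  set g : ℝ → ℝ := fun m => Real.tanh (β * (m + h)) - m with hg
  have hgc : ContinuousOn g (Set.Icc m₁ 1) :=
    ((my_continuous_tanh.comp (continuous_const.mul (continuous_id.add continuous_const))).sub
      continuous_id).continuousOn
  have hgm₁ : 0 < g m₁ := by simp only [hg]; linarith
  have hgone : g 1 < 0 := by
    simp only [hg]
    linarith [_root_.tanh_lt_one (β * (1 + h))]
  have h0mem : (0:ℝ) ∈ Set.Icc (g 1) (g m₁) := ⟨hgone.le, hgm₁.le⟩
  obtain ⟨c, hc, hgc0⟩ := intermediate_value_Icc' hm₁1.le hgc h0mem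
  have hcroot : c = Real.tanh (β * (c + h)) := by
    simp only [hg] at hgc0; linarith
  have hcne1 : c ≠ 1 := by
    intro he; rw [he] at hgc0; linarith
  have hcnem₁ : c ≠ m₁ := by
    intro he; rw [he] at hgc0; linarith
  have hcmem : c ∈ Set.Ioo (-1:ℝ) 1 := by
    constructor
    · linarith [hc.1]
    · exact lt_of_le_of_ne hc.2 hcne1
  have := hmax c hcmem hcroot
  have : m₁ < c := lt_of_le_of_ne hc.1 (Ne.symm hcnem₁)
  linarith [hmax c hcmem hcroot]
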